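/- Let H be a *-algebraic quantum group (multiplier Hopf *-algebra with positive right invariant integral ψ) and define ψ⁺ on the crossed-product-type algebra H ⊗ Func_c(P,ℂ) with exchange relation fx = x f_{lwt(x)−rwt(x)} by ψ⁺(xf) = ψ(x) Σ_ω f(ω). Then ψ⁺ is positive: ψ⁺(a*a) ≥ 0 for all a. [Specialized: For Pol_q(K) with Haar state ψ, the functional ψ⁺ on Fun⁺_{q,c}(AK) defined by ψ⁺(xf) = ψ(x)Σ_ω f(ω) is positive.] -/
import Mathlib


open scoped ComplexOrder

noncomputable section

/-- Positivity of the invariant integral `ψ⁺` on the amplified algebra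
`Fun⁺_{q,c}(AK) = Pol_q(K) · Func_c(P,ℂ)`, with exchange relation
`f·x = x·f_{lwt(x)−rwt(x)}`, defined by `ψ⁺(xf) = ψ(x)·Σ_ω f(ω)`.

A general element is `a = Σᵢ xᵢfᵢ` with `xᵢ ∈ A` bi-homogeneous with `d i = lwt(xᵢ) − rwt(xᵢ)`
and `fᵢ ∈ Func_c(P,ℂ)`. Expanding with the exchange relation,
`ψ⁺(a*a) = Σ_{i,j} ψ(xᵢ* xⱼ) · Σ_ω conj(fᵢ(ω + dᵢ − dⱼ)) fⱼ(ω)`, and the content of the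
statement is that this quantity is nonnegative whenever `ψ` is a positive functional. -/
theorem psiPlus_positive
    {A : Type} [Ring A] [Algebra ℂ A] [StarRing A] [StarModule ℂ A]
    {P : Type} [AddCommGroup P] [DecidableEq P]
    (ψ : A →ₗ[ℂ] ℂ)
    (hψpos : ∀ x : A, 0 ≤ ψ (star x * x))
    (n : ℕ) (x : Fin n → A) (d : Fin n → P) (f : Fin n → (P →₀ ℂ)) :
    0 ≤ ∑ i, ∑ j, ψ (star (x i) * x j) *
      ((f j).sum fun ω c => starRingEnd ℂ ((f i) (ω + d i - d j)) * c) := by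
  classical
  set S : Finset P := Finset.univ.biUnion (fun i => (f i).support.image (fun ω => ω - d i))
    with hS
  have key : ∀ i j, ((f j).sum fun ω c => starRingEnd ℂ ((f i) (ω + d i - d j)) * c)
      = ∑ ω ∈ S, starRingEnd ℂ (f i (ω + d i)) * f j (ω + d j) := by
    intro i j
    rw [Finsupp.sum]
    rw [Finset.sum_subset (h := ?_) (s₂ := S.image (· + d j)) (hf := ?_)]
    · rw [Finset.sum_image (fun a _ b _ h => by exact add_right_cancel h)]
      apply Finset.sum_congr rfl
      intro ω _
      congr 2
      abel_nf
    · intro ω hω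
      refine Finset.mem_image.2 ⟨ω - d j, ?_, by abel⟩
      rw [hS]
      refine Finset.mem_biUnion.2 ⟨j, Finset.mem_univ _, Finset.mem_image.2 ⟨ω, hω, rfl⟩⟩
    · intro ω _ hω
      rw [Finsupp.notMem_support_iff.1 hω, mul_zero]
  have expand : ∀ ω : P, ψ (star (∑ i, f i (ω + d i) • x i) * ∑ j, f j (ω + d j) • x j)
      = ∑ i, ∑ j, ψ (star (x i) * x j)
        * (starRingEnd ℂ (f i (ω + d i)) * f j (ω + d j)) := by
    intro ω
    rw [star_sum, Finset.sum_mul]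
    rw [map_sum]
    apply Finset.sum_congr rfl
    intro i _
    rw [Finset.mul_sum, map_sum]
    apply Finset.sum_congr rfl
    intro j _
    rw [star_smul, smul_mul_smul_comm]
    rw [map_smul]
    simp [RCLike.star_def, smul_eq_mul]
    ring
  calc (0:ℂ) ≤ ∑ ω ∈ S, ψ (star (∑ i, f i (ω + d i) • x i) * ∑ j, f j (ω + d j) • x j) :=
        Finset.sum_nonneg fun ω _ => hψpos _
    _ = ∑ ω ∈ S, ∑ i, ∑ j, ψ (star (x i) * x j)
        * (starRingEnd ℂ (f i (ω + d i)) * f j (ω + d j)) :=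
        Finset.sum_congr rfl fun ω _ => expand ω
    _ = ∑ i, ∑ j, ψ (star (x i) * x j)
        * ∑ ω ∈ S, starRingEnd ℂ (f i (ω + d i)) * f j (ω + d j) := by
        rw [Finset.sum_comm]
        apply Finset.sum_congr rfl
        intro i _
        rw [Finset.sum_comm]
        apply Finset.sum_congr rfl
        intro j _
        rw [Finset.mul_sum]
    _ = _ := by
        apply Finset.sum_congr rfl; intro i _
        apply Finset.sum_congr rfl; intro j _
        rw [key i j]


end
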